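/- Let G be a finite group, χ an irreducible character of G, and U ≤ G a subgroup such that χ̄·χ = (1_U)^G (the permutation character of G on the cosets of U). Then for every x ∈ G and every integer m, |χ(x)| ≤ |χ(x^m)|. -/

import Mathlib

open CategoryTheory

theorem stmt16 {G : Type} [Group G] [Finite G] (V : FDRep ℂ G) [Simple V]
    (U : Subgroup G)
    (hperm : ∀ g : G, star (V.character g) * V.character g =
      (Nat.card (MulAction.fixedBy (G ⧸ U) g) : ℂ)) :
    ∀ (x : G) (m : ℤ), ‖V.character x‖ ≤ ‖V.character (x ^ m)‖ := by
  intro x m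
  have hsub : MulAction.fixedBy (G ⧸ U) x ⊆ MulAction.fixedBy (G ⧸ U) (x ^ m) := by
    intro a ha
    rw [MulAction.mem_fixedBy] at ha ⊢
    exact MulAction.mem_stabilizer_iff.mp
      (zpow_mem (MulAction.mem_stabilizer_iff.mpr ha) m)
  have hcard : Nat.card (MulAction.fixedBy (G ⧸ U) x) ≤
      Nat.card (MulAction.fixedBy (G ⧸ U) (x ^ m)) :=
    Nat.card_mono (Set.toFinite _) hsub
  have key : ∀ g : G, ‖V.character g‖ ^ 2 =
      (Nat.card (MulAction.fixedBy (G ⧸ U) g) : ℝ) := by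
    intro g
    have h := hperm g
    rw [Complex.star_def, Complex.normSq_eq_conj_mul_self.symm] at h
    rw [Complex.sq_norm]
    exact_mod_cast h
  have hsq : ‖V.character x‖ ^ 2 ≤ ‖V.character (x ^ m)‖ ^ 2 := by
    rw [key x, key (x ^ m)]
    exact_mod_cast hcard
  exact (pow_le_pow_iff_left₀ (norm_nonneg _) (norm_nonneg _) two_ne_zero).mp hsq
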